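/- Reverse super-uniformity (first inequality of Lemma 2): under independence of the p-values P_1,...,P_T, monotonicity of the rules f_t and g_t, and super-uniformity of each null p-value, for any coordinatewise non-decreasing function g: {0,1}^T → (0,∞) and any t ≤ T with t ∈ H⁰, one has E[α_t·1{P_t > λ_t}/((1−λ_t)·g(R_{1:T})) | F^{t-1}] ≥ E[α_t/g(R_{1:T}) | F^{t-1}] almost surely. -/

import Mathlib

open MeasureTheory ProbabilityTheory

/-- The rejection-and-candidacy indicator history available just before testing hypothesis `t`:
the pair of indicators `R_j = 1{P_j ≤ α_j}` and `C_j = 1{P_j ≤ λ_j}` for `j < t`,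
encoded as a pair of boolean sequences. -/
noncomputable def history {Ω : Type*} (P alpha lam : ℕ → Ω → ℝ) (t : ℕ) (ω : Ω) :
    (ℕ → Bool) × (ℕ → Bool) :=
  (fun j => decide (j < t ∧ P j ω ≤ alpha j ω), fun j => decide (j < t ∧ P j ω ≤ lam j ω))

/-- The full vector of rejection indicators `R_{1:T}`, encoded as a boolean sequence
supported on the indices `j < T`. -/
noncomputable def rejVector {Ω : Type*} (P alpha : ℕ → Ω → ℝ) (T : ℕ) (ω : Ω) : ℕ → Bool :=
  fun j => decide (j < T ∧ P j ω ≤ alpha j ω)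


noncomputable def histB (f g' : ℕ → (ℕ → Bool) × (ℕ → Bool) → ℝ) (b : ℕ → Bool)
    (x : ℕ → ℝ) : ℕ → (ℕ → Bool) × (ℕ → Bool)
  | s =>
    (fun j => if h : j < s then !b j && decide (x j ≤ f j (histB f g' b x j)) else false,
     fun j => if h : j < s then !b j && decide (x j ≤ g' j (histB f g' b x j)) else false)
  termination_by s => s
  decreasing_by all_goals exact h

lemma histB_fst (f g' : ℕ → (ℕ → Bool) × (ℕ → Bool) → ℝ) (b : ℕ → Bool) (x : ℕ → ℝ)
    (s j : ℕ) : (histB f g' b x s).1 j =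
      if j < s then !b j && decide (x j ≤ f j (histB f g' b x j)) else false := by
  rw [histB]; simp

lemma histB_snd (f g' : ℕ → (ℕ → Bool) × (ℕ → Bool) → ℝ) (b : ℕ → Bool) (x : ℕ → ℝ)
    (s j : ℕ) : (histB f g' b x s).2 j =
      if j < s then !b j && decide (x j ≤ g' j (histB f g' b x j)) else false := by
  rw [histB]; simp

section Det
variable {f g' : ℕ → (ℕ → Bool) × (ℕ → Bool) → ℝ}

lemma bool_and_decide_le {c c' : Bool} {r r' x : ℝ} (hc : c' ≤ c) (hr : r' ≤ r) :
    (c' && decide (x ≤ r')) ≤ (c && decide (x ≤ r)) := by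
  rw [Bool.le_iff_imp]
  simp only [Bool.and_eq_true, decide_eq_true_eq]
  rintro ⟨h1, h2⟩
  exact ⟨Bool.le_iff_imp.mp hc h1, h2.trans hr⟩

/-- more banning gives (coordinatewise) smaller histories -/
lemma histB_mono (hf : ∀ s, Monotone (f s)) (hg' : ∀ s, Monotone (g' s))
    {b b' : ℕ → Bool} (hb : b ≤ b') (x : ℕ → ℝ) :
    ∀ s, histB f g' b' x s ≤ histB f g' b x s := by
  intro s
  induction s using Nat.strong_induction_on with
  | _ s ih =>
    constructor
    · intro j
      rw [histB_fst, histB_fst]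
      by_cases h : j < s
      · simp only [h, if_true]
        exact bool_and_decide_le (by have := hb j; revert this; cases b j <;> cases b' j <;> simp) (hf j (ih j h))
      · simp [h]
    · intro j
      rw [histB_snd, histB_snd]
      by_cases h : j < s
      · simp only [h, if_true]
        exact bool_and_decide_le (by have := hb j; revert this; cases b j <;> cases b' j <;> simp) (hg' j (ih j h))
      · simp [h]

/-- the history only depends on un-banned coordinates below `s` -/
lemma histB_congr {b : ℕ → Bool} {x x' : ℕ → ℝ} :
    ∀ s, (∀ j, j < s → b j = false → x j = x' j) →
      histB f g' b x s = histB f g' b x' s := by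
  intro s
  induction s using Nat.strong_induction_on with
  | _ s ih =>
    intro hx
    ext j
    · rw [histB_fst, histB_fst]
      by_cases h : j < s
      · cases hb : b j
        · rw [hx j h hb, ih j h (fun i hi hbi => hx i (hi.trans h) hbi)]
        · simp [h, hb]
      · simp [h]
    · rw [histB_snd, histB_snd]
      by_cases h : j < s
      · cases hb : b j
        · rw [hx j h hb, ih j h (fun i hi hbi => hx i (hi.trans h) hbi)]
        · simp [h, hb]
      · simp [h]


variable {Ω : Type*} {P alpha lam : ℕ → Ω → ℝ}

lemma histB_eq_history
    (hpreda : ∀ s ω, alpha s ω = f s (history P alpha lam s ω))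
    (hpredl : ∀ s ω, lam s ω = g' s (history P alpha lam s ω)) (ω : Ω) :
    ∀ s, histB f g' (fun _ => false) (fun j => P j ω) s = history P alpha lam s ω := by
  intro s
  induction s using Nat.strong_induction_on with
  | _ s ih =>
    ext j
    · rw [histB_fst]
      show _ = decide (j < s ∧ P j ω ≤ alpha j ω)
      by_cases h : j < s
      · rw [ih j h, ← hpreda j ω]
        simp [h]
      · simp [h]
    · rw [histB_snd]
      show _ = decide (j < s ∧ P j ω ≤ lam j ω)
      by_cases h : j < s
      · rw [ih j h, ← hpredl j ω]
        simp [h]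
      · simp [h]

lemma rejVector_eq_histB
    (hpreda : ∀ s ω, alpha s ω = f s (history P alpha lam s ω))
    (hpredl : ∀ s ω, lam s ω = g' s (history P alpha lam s ω)) (ω : Ω) (T : ℕ) :
    rejVector P alpha T ω = (histB f g' (fun _ => false) (fun j => P j ω) T).1 := by
  have := histB_eq_history (f := f) (g' := g') hpreda hpredl ω T
  rw [this]
  ext j
  show decide (j < T ∧ P j ω ≤ alpha j ω) = decide (j < T ∧ P j ω ≤ alpha j ω)
  rfl

lemma histB_mask_eq
    (hpreda : ∀ s ω, alpha s ω = f s (history P alpha lam s ω))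
    (hpredl : ∀ s ω, lam s ω = g' s (history P alpha lam s ω))
    {t : ℕ} {ω : Ω} (hgt : lam t ω < P t ω) (hal : alpha t ω ≤ lam t ω) :
    ∀ s, histB f g' (fun j => decide (j = t)) (fun j => P j ω) s
        = histB f g' (fun _ => false) (fun j => P j ω) s := by
  intro s
  induction s using Nat.strong_induction_on with
  | _ s ih =>
    ext j
    · rw [histB_fst, histB_fst]
      by_cases h : j < s
      · by_cases hjt : j = t
        · subst hjt
          rw [histB_eq_history (f := f) (g' := g') hpreda hpredl ω j, ← hpreda j ω]
          simp [h, not_le.mpr (lt_of_le_of_lt hal hgt)]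
        · rw [ih j h]
          simp [hjt]
      · simp [h]
    · rw [histB_snd, histB_snd]
      by_cases h : j < s
      · by_cases hjt : j = t
        · subst hjt
          rw [histB_eq_history (f := f) (g' := g') hpreda hpredl ω j, ← hpredl j ω]
          simp [h, not_le.mpr hgt]
        · rw [ih j h]
          simp [hjt]
      · simp [h]

end Det

section Meas

lemma measurable_comp_of_finite {Ω' γ β : Type*} [MeasurableSpace Ω'] [MeasurableSpace γ]
    [MeasurableSingletonClass γ] [MeasurableSpace β] {e : Ω' → γ} (he : Measurable e)
    (V : Finset γ) (hV : ∀ ω, e ω ∈ V) (F : γ → β) : Measurable fun ω => F (e ω) := by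
  classical
  intro A hA
  have h : (fun ω => F (e ω)) ⁻¹' A = e ⁻¹' (V.filter (fun v => F v ∈ A) : Finset γ) := by
    ext ω
    simp [hV ω]
  rw [h]
  exact he (V.filter (fun v => F v ∈ A)).measurableSet

lemma measurable_decide_le {Ω' : Type*} [MeasurableSpace Ω'] {u v : Ω' → ℝ}
    (hu : Measurable u) (hv : Measurable v) :
    Measurable fun ω => decide (u ω ≤ v ω) := by
  have h : (fun ω => decide (u ω ≤ v ω)) = fun ω => if u ω ≤ v ω then true else false := by
    funext ω
    by_cases hq : u ω ≤ v ω <;> simp [hq]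
  rw [h]
  exact Measurable.ite (measurableSet_le hu hv) measurable_const measurable_const

lemma measurable_histB {Ω' : Type*} [MeasurableSpace Ω']
    {f g' : ℕ → (ℕ → Bool) × (ℕ → Bool) → ℝ} {x : Ω' → ℕ → ℝ}
    (hx : ∀ j, Measurable fun ω => x ω j) (b : ℕ → Bool) :
    ∀ s, Measurable (fun ω => histB f g' b (x ω) s) ∧
      ∃ V : Finset ((ℕ → Bool) × (ℕ → Bool)), ∀ ω, histB f g' b (x ω) s ∈ V := by
  intro s
  induction s using Nat.strong_induction_on with
  | _ s ih =>
    classical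
    constructor
    · have hcoord1 : ∀ j, Measurable fun ω => (histB f g' b (x ω) s).1 j := by
        intro j
        simp only [histB_fst]
        by_cases h : j < s
        · simp only [h, if_true]
          obtain ⟨hm, V, hV⟩ := ih j h
          have hF : Measurable fun ω => f j (histB f g' b (x ω) j) :=
            measurable_comp_of_finite hm V hV _
          exact Measurable.comp (g := fun p : Bool => (!b j && p)) measurable_from_top
            (measurable_decide_le (hx j) hF)
        · simp only [h, if_false]
          exact measurable_const
      have hcoord2 : ∀ j, Measurable fun ω => (histB f g' b (x ω) s).2 j := by
        intro j
        simp only [histB_snd]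
        by_cases h : j < s
        · simp only [h, if_true]
          obtain ⟨hm, V, hV⟩ := ih j h
          have hF : Measurable fun ω => g' j (histB f g' b (x ω) j) :=
            measurable_comp_of_finite hm V hV _
          exact Measurable.comp (g := fun p : Bool => (!b j && p)) measurable_from_top
            (measurable_decide_le (hx j) hF)
        · simp only [h, if_false]
          exact measurable_const
      exact Measurable.prod (measurable_pi_lambda _ hcoord1) (measurable_pi_lambda _ hcoord2)
    · set E : ((Fin s → Bool) × (Fin s → Bool)) → ((ℕ → Bool) × (ℕ → Bool)) := fun v =>
        (fun j => if h : j < s then v.1 ⟨j, h⟩ else false,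
         fun j => if h : j < s then v.2 ⟨j, h⟩ else false) with hE
      refine ⟨Finset.image E Finset.univ, fun ω => ?_⟩
      rw [Finset.mem_image]
      refine ⟨(fun i => (histB f g' b (x ω) s).1 i, fun i => (histB f g' b (x ω) s).2 i),
        Finset.mem_univ _, ?_⟩
      rw [hE]
      ext j
      · by_cases h : j < s
        · simp [h]
        · simp [h, histB_fst]
      · by_cases h : j < s
        · simp [h]
        · simp [h, histB_snd]

lemma measurable_history {Ω : Type*} [MeasurableSpace Ω] {P alpha lam : ℕ → Ω → ℝ}
    (hP : ∀ j, Measurable (P j))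
    (hα : ∀ j, Measurable (alpha j)) (hlm : ∀ j, Measurable (lam j)) (t : ℕ) :
    Measurable (history P alpha lam t) := by
  apply Measurable.prod
  · apply measurable_pi_lambda
    intro j
    show Measurable fun ω => decide (j < t ∧ P j ω ≤ alpha j ω)
    by_cases h : j < t
    · simp only [h, true_and]
      exact measurable_decide_le (hP j) (hα j)
    · simp only [h, false_and, decide_false]
      exact measurable_const
  · apply measurable_pi_lambda
    intro j
    show Measurable fun ω => decide (j < t ∧ P j ω ≤ lam j ω)
    by_cases h : j < t
    · simp only [h, true_and]
      exact measurable_decide_le (hP j) (hlm j)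
    · simp only [h, false_and, decide_false]
      exact measurable_const

end Meas

lemma integrable_of_le_comp {Ω γ : Type*} [MeasurableSpace Ω] (μ : Measure Ω)
    [IsFiniteMeasure μ] {h : Ω → ℝ} (hm : AEStronglyMeasurable h μ) {e : Ω → γ}
    (V : Finset γ) (hV : ∀ ω, e ω ∈ V) (F : γ → ℝ) (hb : ∀ ω, ‖h ω‖ ≤ ‖F (e ω)‖) :
    Integrable h μ := by
  classical
  obtain ⟨C, hC⟩ := (V.image fun v => ‖F v‖).exists_le
  exact Integrable.mono' (integrable_const C) hm
    (Filter.Eventually.of_forall fun ω =>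
      (hb ω).trans (hC _ (Finset.mem_image_of_mem _ (hV ω))))


/-- Reverse super-uniformity (first inequality of Lemma 2): under independence of the
p-values `P_1, ..., P_T`, monotonicity of the rules, and super-uniformity of each null
p-value, for any coordinatewise non-decreasing positive function `g` of the rejection
vector and any null index `t < T`,
`E[α_t · 1{P_t > λ_t}/((1 − λ_t) · g(R_{1:T})) | F^{t-1}] ≥ E[α_t / g(R_{1:T}) | F^{t-1}]`
almost surely. -/
theorem lemma2_first_inequality {Ω : Type*} [m0 : MeasurableSpace Ω]
    (μ : Measure Ω) [IsProbabilityMeasure μ]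
    (T : ℕ) (P alpha lam : ℕ → Ω → ℝ) (H0 : Set ℕ)
    (hPmeas : ∀ j, Measurable (P j)) (hP01 : ∀ j ω, P j ω ∈ Set.Icc (0 : ℝ) 1)
    -- the p-values `P_1, ..., P_T` are independent
    (hindep : ProbabilityTheory.iIndepFun (m := fun _ : Fin T => (inferInstance : MeasurableSpace ℝ))
      (fun i : Fin T => P i.1) μ)
    -- each null p-value is super-uniform
    (hnull : ∀ j ∈ H0, ∀ u ∈ Set.Icc (0 : ℝ) 1, μ {ω | P j ω ≤ u} ≤ ENNReal.ofReal u)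
    (hameas : ∀ j, Measurable (alpha j)) (ha01 : ∀ j ω, alpha j ω ∈ Set.Ioo (0 : ℝ) 1)
    (hlmeas : ∀ j, Measurable (lam j)) (hl01 : ∀ j ω, lam j ω ∈ Set.Ioo (0 : ℝ) 1)
    (halam : ∀ j ω, alpha j ω ≤ lam j ω)
    -- predictability and monotonicity of the rules producing `α_t` and `λ_t`
    (f g' : ℕ → (ℕ → Bool) × (ℕ → Bool) → ℝ)
    (hpreda : ∀ s ω, alpha s ω = f s (history P alpha lam s ω))
    (hpredl : ∀ s ω, lam s ω = g' s (history P alpha lam s ω))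
    (hfmono : ∀ s, Monotone (f s)) (hg'mono : ∀ s, Monotone (g' s))
    -- `g` is a positive coordinatewise non-decreasing function of the rejection vector
    (g : (ℕ → Bool) → ℝ) (hgpos : ∀ x, 0 < g x) (hgmono : Monotone g)
    (t : ℕ) (ht : t < T) (htnull : t ∈ H0) :
    ∀ᵐ ω ∂μ,
      (μ[fun ω' => alpha t ω' / g (rejVector P alpha T ω') |
          MeasurableSpace.comap (history P alpha lam t) inferInstance]) ω
        ≤ (μ[fun ω' => alpha t ω' * (if lam t ω' < P t ω' then (1 : ℝ) else 0) /
            ((1 - lam t ω') * g (rejVector P alpha T ω')) |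
          MeasurableSpace.comap (history P alpha lam t) inferInstance]) ω := by
  classical
  set x : Ω → ℕ → ℝ := fun ω j => P j ω with hxdef
  set bot : ℕ → Bool := fun _ => false with hbotdef
  set msk : ℕ → Bool := fun j => decide (j = t) with hmskdef
  set f1 : Ω → ℝ := fun ω' => alpha t ω' / g (rejVector P alpha T ω') with hf1def
  set f2 : Ω → ℝ := fun ω' => alpha t ω' * (if lam t ω' < P t ω' then (1 : ℝ) else 0) /
      ((1 - lam t ω') * g (rejVector P alpha T ω')) with hf2def
  -- basic identifications
  have hhist : ∀ ω s, histB f g' bot (x ω) s = history P alpha lam s ω := fun ω s =>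
    histB_eq_history hpreda hpredl ω s
  have hrej : ∀ ω, rejVector P alpha T ω = (histB f g' bot (x ω) T).1 := fun ω =>
    rejVector_eq_histB hpreda hpredl ω T
  have hmask_le : ∀ ω, (histB f g' msk (x ω) T).1 ≤ (histB f g' bot (x ω) T).1 := fun ω =>
    (histB_mono hfmono hg'mono (fun j => Bool.false_le _) (x ω) T).1
  have hgR : ∀ ω, g ((histB f g' msk (x ω) T).1) ≤ g (rejVector P alpha T ω) := fun ω => by
    rw [hrej ω]; exact hgmono (hmask_le ω)
  have hmask_eq : ∀ ω, lam t ω < P t ω →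
      (histB f g' msk (x ω) T).1 = rejVector P alpha T ω := fun ω h => by
    rw [hrej ω, histB_mask_eq hpreda hpredl h (halam t ω) T]
  -- measurability and finite range of the deterministic recursions
  have hxmeas : ∀ j, Measurable fun ω => x ω j := fun j => hPmeas j
  obtain ⟨hmT, VT, hVT⟩ := measurable_histB (f := f) (g' := g') hxmeas bot T
  obtain ⟨hmS, VS, hVS⟩ := measurable_histB (f := f) (g' := g') hxmeas msk T
  obtain ⟨hmt, Vt, hVt⟩ := measurable_histB (f := f) (g' := g') hxmeas bot t
  have hgRmeas : Measurable fun ω => g (rejVector P alpha T ω) := by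
    have h1 : Measurable fun ω => g ((histB f g' bot (x ω) T).1) :=
      measurable_comp_of_finite hmT VT hVT fun p => g p.1
    have : (fun ω => g (rejVector P alpha T ω)) = fun ω => g ((histB f g' bot (x ω) T).1) :=
      funext fun ω => by rw [hrej ω]
    rw [this]; exact h1
  have hgSmeas : Measurable fun ω => g ((histB f g' msk (x ω) T).1) :=
    measurable_comp_of_finite hmS VS hVS fun p => g p.1
  -- integrability of the two integrands
  have hf1meas : Measurable f1 := (hameas t).div hgRmeas
  have hf1int : Integrable f1 μ := by
    refine integrable_of_le_comp μ hf1meas.aestronglyMeasurable VT hVT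
      (fun p => 1 / g p.1) fun ω => ?_
    rw [hf1def]
    have h0 : (0:ℝ) ≤ alpha t ω / g (rejVector P alpha T ω) :=
      div_nonneg (ha01 t ω).1.le (hgpos _).le
    rw [Real.norm_of_nonneg h0, hrej ω]
    refine le_trans ?_ (le_abs_self _)
    exact (div_le_div_iff_of_pos_right (hgpos _)).mpr (ha01 t ω).2.le
  have hindmeas : Measurable fun ω => (if lam t ω < P t ω then (1:ℝ) else 0) :=
    Measurable.ite (measurableSet_lt (hlmeas t) (hPmeas t)) measurable_const measurable_const
  have hf2meas : Measurable f2 :=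
    ((hameas t).mul hindmeas).div ((measurable_const.sub (hlmeas t)).mul hgRmeas)
  have hf2nonneg : ∀ ω, 0 ≤ f2 ω := by
    intro ω
    rw [hf2def]
    have hnum : 0 ≤ alpha t ω * (if lam t ω < P t ω then (1:ℝ) else 0) :=
      mul_nonneg (ha01 t ω).1.le (by positivity)
    have hden : 0 < (1 - lam t ω) * g (rejVector P alpha T ω) :=
      mul_pos (by linarith [(hl01 t ω).2]) (hgpos _)
    exact div_nonneg hnum hden.le
  have hf2int : Integrable f2 μ := by
    refine integrable_of_le_comp (e := fun ω => (histB f g' bot (x ω) t, histB f g' bot (x ω) T))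
      μ hf2meas.aestronglyMeasurable (Vt ×ˢ VT)
      (fun ω => Finset.mk_mem_product (hVt ω) (hVT ω))
      (fun p => f t p.1 / ((1 - g' t p.1) * g p.2.1)) fun ω => ?_
    rw [Real.norm_of_nonneg (hf2nonneg ω)]
    refine le_trans ?_ (le_abs_self _)
    have he1 : f t (histB f g' bot (x ω) t) = alpha t ω := by rw [hhist ω t, ← hpreda t ω]
    have he2 : g' t (histB f g' bot (x ω) t) = lam t ω := by rw [hhist ω t, ← hpredl t ω]
    beta_reduce
    rw [he1, he2, ← hrej ω]
    have hden : 0 < (1 - lam t ω) * g (rejVector P alpha T ω) :=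
      mul_pos (by linarith [(hl01 t ω).2]) (hgpos _)
    rw [hf2def]
    beta_reduce
    refine (div_le_div_iff_of_pos_right hden).mpr ?_
    have hind : (if lam t ω < P t ω then (1:ℝ) else 0) ≤ 1 := by split_ifs <;> norm_num
    exact mul_le_of_le_one_right (ha01 t ω).1.le hind
  -- the sub-σ-algebra
  have hhistmeas : Measurable (history P alpha lam t) :=
    measurable_history hPmeas hameas hlmeas t
  have hm : MeasurableSpace.comap (history P alpha lam t) inferInstance ≤ m0 :=
    hhistmeas.comap_le
  -- the atom decomposition apparatus
  set E : ((Fin t → Bool) × (Fin t → Bool)) → ((ℕ → Bool) × (ℕ → Bool)) := fun v =>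
    (fun j => if h : j < t then v.1 ⟨j, h⟩ else false,
     fun j => if h : j < t then v.2 ⟨j, h⟩ else false) with hEdef
  set e : Ω → ((Fin t → Bool) × (Fin t → Bool)) := fun ω =>
    (fun i => (history P alpha lam t ω).1 i, fun i => (history P alpha lam t ω).2 i)
    with hedef
  have hhist_fst_ge : ∀ ω j, ¬ j < t → (history P alpha lam t ω).1 j = false := by
    intro ω j h
    show decide (j < t ∧ P j ω ≤ alpha j ω) = false
    simp [h]
  have hhist_snd_ge : ∀ ω j, ¬ j < t → (history P alpha lam t ω).2 j = false := by
    intro ω j h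
    show decide (j < t ∧ P j ω ≤ lam j ω) = false
    simp [h]
  have hEe : ∀ ω, E (e ω) = history P alpha lam t ω := by
    intro ω
    rw [hEdef, hedef]
    ext j
    · by_cases h : j < t
      · simp [h]
      · simp only [dif_neg h]
        exact (hhist_fst_ge ω j h).symm
    · by_cases h : j < t
      · simp [h]
      · simp only [dif_neg h]
        exact (hhist_snd_ge ω j h).symm
  have hemeas : Measurable e := by
    rw [hedef]
    refine Measurable.prod ?_ ?_
    · exact measurable_pi_lambda _ fun i =>
        (measurable_pi_apply (i : ℕ)).comp hhistmeas.fst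
    · exact measurable_pi_lambda _ fun i =>
        (measurable_pi_apply (i : ℕ)).comp hhistmeas.snd
  have hatommeas : ∀ v, MeasurableSet (e ⁻¹' {v}) := fun v =>
    hemeas (measurableSet_singleton v)
  -- the heart: the per-atom inequality
  have hatom : ∀ v : (Fin t → Bool) × (Fin t → Bool),
      ∫ ω in e ⁻¹' {v}, f1 ω ∂μ ≤ ∫ ω in e ⁻¹' {v}, f2 ω ∂μ := by
    intro v
    rcases Set.eq_empty_or_nonempty (e ⁻¹' {v}) with hA | ⟨ω₀, hω₀⟩
    · rw [hA]
      simp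
    set a := alpha t ω₀ with hadef
    set l := lam t ω₀ with hldef
    have ha0 : 0 < a := (ha01 t ω₀).1
    have ha1 : a < 1 := (ha01 t ω₀).2
    have hl0 : 0 < l := (hl01 t ω₀).1
    have hl1 : l < 1 := (hl01 t ω₀).2
    have hal : a ≤ l := halam t ω₀
    have h1l : (0:ℝ) < 1 - l := by linarith
    have hconst : ∀ ω, ω ∈ e ⁻¹' {v} →
        history P alpha lam t ω = history P alpha lam t ω₀ := by
      intro ω hω
      rw [← hEe ω, ← hEe ω₀]
      have h1 : e ω = v := hω
      have h2 : e ω₀ = v := hω₀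
      rw [h1, h2]
    have haconst : ∀ ω ∈ e ⁻¹' {v}, alpha t ω = a := fun ω hω => by
      rw [hpreda t ω, hconst ω hω, hadef, hpreda t ω₀]
    have hlconst : ∀ ω ∈ e ⁻¹' {v}, lam t ω = l := fun ω hω => by
      rw [hpredl t ω, hconst ω hω, hldef, hpredl t ω₀]
    have hmem_iff : ∀ ω, ω ∈ e ⁻¹' {v} ↔ history P alpha lam t ω = E v := by
      intro ω
      constructor
      · intro hω
        rw [← hEe ω]
        have h1 : e ω = v := hω
        rw [h1]
      · intro hh
        show e ω = v
        rw [hedef]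
        ext i
        · show (history P alpha lam t ω).1 (i : ℕ) = v.1 i
          rw [hh, hEdef]
          simp [i.isLt]
        · show (history P alpha lam t ω).2 (i : ℕ) = v.2 i
          rw [hh, hEdef]
          simp [i.isLt]
    set Y : Ω → ℝ := (e ⁻¹' {v}).indicator
      (fun ω => a / ((1 - l) * g ((histB f g' msk (x ω) T).1))) with hYdef
    set Z : Ω → ℝ := fun ω => if l < P t ω then 1 else 0 with hZdef
    -- step 1 : pass to the masked rejection vector
    have hh3meas : Measurable fun ω => a / g ((histB f g' msk (x ω) T).1) :=
      measurable_const.div hgSmeas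
    have hh3int : Integrable (fun ω => a / g ((histB f g' msk (x ω) T).1)) μ :=
      integrable_of_le_comp (e := fun ω => histB f g' msk (x ω) T) μ
        hh3meas.aestronglyMeasurable VS hVS (fun p => a / g p.1) (fun ω => le_rfl)
    have hstep1 : ∫ ω in e ⁻¹' {v}, f1 ω ∂μ
        ≤ ∫ ω in e ⁻¹' {v}, a / g ((histB f g' msk (x ω) T).1) ∂μ := by
      refine setIntegral_mono_on hf1int.integrableOn hh3int.integrableOn (hatommeas v) ?_
      intro ω hω
      rw [hf1def]
      beta_reduce
      rw [haconst ω hω]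
      exact div_le_div_of_nonneg_left ha0.le (hgpos _) (hgR ω)
    -- step 2 : rewrite as a multiple of ∫ Y
    have hstep2 : ∫ ω in e ⁻¹' {v}, a / g ((histB f g' msk (x ω) T).1) ∂μ
        = (1 - l) * ∫ ω, Y ω ∂μ := by
      rw [← integral_indicator (hatommeas v)]
      have hind : (e ⁻¹' {v}).indicator (fun ω => a / g ((histB f g' msk (x ω) T).1))
          = fun ω => (1 - l) * Y ω := by
        funext ω
        by_cases hω : ω ∈ e ⁻¹' {v}
        · rw [Set.indicator_of_mem hω, hYdef, Set.indicator_of_mem hω]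
          have hgne : g ((histB f g' msk (x ω) T).1) ≠ 0 := (hgpos _).ne'
          have h1lne : (1:ℝ) - l ≠ 0 := h1l.ne'
          field_simp
        · rw [Set.indicator_of_notMem hω, hYdef, Set.indicator_of_notMem hω, mul_zero]
      rw [hind, integral_const_mul]
    -- properties of Y and Z
    have hYmeas : Measurable Y := by
      rw [hYdef]
      exact (measurable_const.div (measurable_const.mul hgSmeas)).indicator (hatommeas v)
    have hYint : Integrable Y μ := by
      refine integrable_of_le_comp (e := fun ω => histB f g' msk (x ω) T) μ
        hYmeas.aestronglyMeasurable VS hVS (fun p => a / ((1 - l) * g p.1)) fun ω => ?_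
      rw [hYdef]
      by_cases hω : ω ∈ e ⁻¹' {v}
      · rw [Set.indicator_of_mem hω]
      · rw [Set.indicator_of_notMem hω, norm_zero]
        exact norm_nonneg _
    have hYnonneg : ∀ ω, 0 ≤ Y ω := by
      intro ω
      rw [hYdef]
      refine Set.indicator_nonneg (fun ω' _ => ?_) ω
      exact div_nonneg ha0.le (mul_pos h1l (hgpos _)).le
    have hZmeas : Measurable Z := by
      rw [hZdef]
      exact Measurable.ite (measurableSet_lt measurable_const (hPmeas t))
        measurable_const measurable_const
    have hZint : Integrable Z μ := by
      refine Integrable.mono' (integrable_const 1) hZmeas.aestronglyMeasurable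
        (Filter.Eventually.of_forall fun ω => ?_)
      simp only [hZdef]
      split_ifs <;> simp
    -- step 3 : the right-hand side integrand is Y * Z
    have hstep3 : ∫ ω in e ⁻¹' {v}, f2 ω ∂μ = ∫ ω, Y ω * Z ω ∂μ := by
      rw [← integral_indicator (hatommeas v)]
      congr 1
      funext ω
      by_cases hω : ω ∈ e ⁻¹' {v}
      · rw [Set.indicator_of_mem hω, hf2def, hYdef, Set.indicator_of_mem hω, hZdef]
        beta_reduce
        rw [haconst ω hω, hlconst ω hω]
        by_cases hlt : l < P t ω
        · rw [if_pos hlt]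
          have hgeq : g ((histB f g' msk (x ω) T).1) = g (rejVector P alpha T ω) := by
            rw [hmask_eq ω (by rw [hlconst ω hω]; exact hlt)]
          rw [hgeq]
          ring
        · rw [if_neg hlt]
          ring
      · rw [Set.indicator_of_notMem hω, hYdef, Set.indicator_of_notMem hω, zero_mul]
    -- independence of Y and Z
    have hindYZ : IndepFun Y Z μ := by
      set t' : Fin T := ⟨t, ht⟩ with ht'def
      set S1 : Finset (Fin T) := Finset.univ.erase t' with hS1def
      have hdisjST : Disjoint S1 ({t'} : Finset (Fin T)) :=
        Finset.disjoint_singleton_right.mpr (Finset.notMem_erase _ _)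
      have hIF := hindep.indepFun_finset S1 {t'} hdisjST (fun i => hPmeas i.1)
      set xt : (↥S1 → ℝ) → ℕ → ℝ := fun y j =>
        if h : j < T ∧ j ≠ t then
          y ⟨⟨j, h.1⟩, Finset.mem_erase.mpr ⟨Fin.ne_of_val_ne h.2, Finset.mem_univ _⟩⟩
        else 0 with hxtdef
      have hxtmeas : ∀ j, Measurable fun y => xt y j := by
        intro j
        rw [hxtdef]
        by_cases h : j < T ∧ j ≠ t
        · simp only [dif_pos h]
          exact measurable_pi_apply _
        · simp only [dif_neg h]
          exact measurable_const
      obtain ⟨hmt', Vt', hVt'⟩ := measurable_histB (f := f) (g' := g') hxtmeas bot t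
      obtain ⟨hmS', VS', hVS'⟩ := measurable_histB (f := f) (g' := g') hxtmeas msk T
      set φ : (↥S1 → ℝ) → ℝ := fun y =>
        (if histB f g' bot (xt y) t = E v then (1:ℝ) else 0) *
          (a / ((1 - l) * g ((histB f g' msk (xt y) T).1))) with hφdef
      set ζ : (↥({t'} : Finset (Fin T)) → ℝ) → ℝ := fun y =>
        if l < y ⟨t', Finset.mem_singleton_self t'⟩ then (1:ℝ) else 0 with hζdef
      have hφmeas : Measurable φ := by
        rw [hφdef]
        refine Measurable.mul ?_ ?_
        · exact Measurable.ite (hmt' (measurableSet_singleton (E v)))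
            measurable_const measurable_const
        · exact measurable_const.div (measurable_const.mul
            (measurable_comp_of_finite hmS' VS' hVS' fun p => g p.1))
      have hζmeas : Measurable ζ := by
        rw [hζdef]
        exact Measurable.ite (measurableSet_lt measurable_const (measurable_pi_apply _))
          measurable_const measurable_const
      have hxtW : ∀ ω j, j < T → j ≠ t →
          xt (fun i : ↥S1 => P (i : Fin T).1 ω) j = P j ω := by
        intro ω j h1 h2
        rw [hxtdef]
        simp only [dif_pos (⟨h1, h2⟩ : j < T ∧ j ≠ t)]
      have hcongr_t : ∀ ω,
          histB f g' bot (xt (fun i : ↥S1 => P (i : Fin T).1 ω)) t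
            = histB f g' bot (x ω) t := by
        intro ω
        refine histB_congr t fun j hj _ => ?_
        exact hxtW ω j (hj.trans ht) (Nat.ne_of_lt hj)
      have hcongr_T : ∀ ω,
          histB f g' msk (xt (fun i : ↥S1 => P (i : Fin T).1 ω)) T
            = histB f g' msk (x ω) T := by
        intro ω
        refine histB_congr T fun j hj hbj => ?_
        have hjt : j ≠ t := by
          intro hjeq
          rw [hmskdef] at hbj
          simp [hjeq] at hbj
        exact hxtW ω j hj hjt
      have hYcomp : Y = fun ω =>
          φ ((fun ω' (i : ↥S1) => P (i : Fin T).1 ω') ω) := by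
        funext ω
        rw [hYdef, hφdef]
        beta_reduce
        rw [hcongr_t ω, hcongr_T ω, hhist ω t]
        by_cases hω : ω ∈ e ⁻¹' {v}
        · rw [Set.indicator_of_mem hω, if_pos ((hmem_iff ω).mp hω), one_mul]
        · rw [Set.indicator_of_notMem hω,
            if_neg (fun hcond => hω ((hmem_iff ω).mpr hcond)), zero_mul]
      have hZcomp : Z = fun ω =>
          ζ ((fun ω' (i : ↥({t'} : Finset (Fin T))) => P (i : Fin T).1 ω') ω) := by
        funext ω
        rw [hZdef, hζdef]
      rw [hYcomp, hZcomp]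
      exact hIF.comp hφmeas hζmeas
    -- putting things together
    have hmul : ∫ ω, Y ω * Z ω ∂μ = (∫ ω, Y ω ∂μ) * ∫ ω, Z ω ∂μ :=
      hindYZ.integral_fun_mul_eq_mul_integral hYint.aestronglyMeasurable hZint.aestronglyMeasurable
    have hZval : ∫ ω, Z ω ∂μ = (μ {ω | l < P t ω}).toReal := by
      have hZind : Z = Set.indicator {ω | l < P t ω} (1 : Ω → ℝ) := by
        funext ω
        simp only [hZdef]
        by_cases hω : l < P t ω
        · simp [Set.indicator, hω]
        · simp [Set.indicator, hω]
      rw [hZind, integral_indicator_one (measurableSet_lt measurable_const (hPmeas t))]; rfl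
    have hZbound : 1 - l ≤ ∫ ω, Z ω ∂μ := by
      rw [hZval]
      have hcompl : {ω | l < P t ω} = {ω | P t ω ≤ l}ᶜ := by
        ext ω
        simp [not_le]
      have hμle : μ {ω | P t ω ≤ l} ≤ ENNReal.ofReal l :=
        hnull t htnull l ⟨hl0.le, hl1.le⟩
      have hmeasle : MeasurableSet {ω | P t ω ≤ l} :=
        measurableSet_le (hPmeas t) measurable_const
      rw [hcompl, prob_compl_eq_one_sub hmeasle,
        ENNReal.toReal_sub_of_le prob_le_one ENNReal.one_ne_top, ENNReal.toReal_one]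
      have : (μ {ω | P t ω ≤ l}).toReal ≤ l := by
        have := ENNReal.toReal_mono ENNReal.ofReal_ne_top hμle
        rwa [ENNReal.toReal_ofReal hl0.le] at this
      linarith
    calc ∫ ω in e ⁻¹' {v}, f1 ω ∂μ
        ≤ ∫ ω in e ⁻¹' {v}, a / g ((histB f g' msk (x ω) T).1) ∂μ := hstep1
      _ = (1 - l) * ∫ ω, Y ω ∂μ := hstep2
      _ ≤ (∫ ω, Z ω ∂μ) * ∫ ω, Y ω ∂μ :=
          mul_le_mul_of_nonneg_right hZbound (integral_nonneg hYnonneg)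
      _ = (∫ ω, Y ω ∂μ) * ∫ ω, Z ω ∂μ := mul_comm _ _
      _ = ∫ ω, Y ω * Z ω ∂μ := hmul.symm
      _ = ∫ ω in e ⁻¹' {v}, f2 ω ∂μ := hstep3.symm
  -- the key inequality for all sets of the sub-σ-algebra
  have hkey : ∀ s, MeasurableSet[MeasurableSpace.comap (history P alpha lam t)
      inferInstance] s → ∫ ω in s, f1 ω ∂μ ≤ ∫ ω in s, f2 ω ∂μ := by
    rintro s ⟨B, hB, rfl⟩
    have hdecomp : history P alpha lam t ⁻¹' B =
        ⋃ v ∈ Finset.univ.filter (fun v => E v ∈ B), e ⁻¹' {v} := by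
      ext ω
      simp only [Set.mem_preimage, Set.mem_iUnion, Finset.mem_filter, Finset.mem_univ,
        true_and, Set.mem_singleton_iff]
      constructor
      · intro hω
        exact ⟨e ω, by rw [hEe ω]; exact hω, rfl⟩
      · rintro ⟨v, hv, hev⟩
        rw [← hEe ω, hev]
        exact hv
    have hdisj : Set.Pairwise (↑(Finset.univ.filter (fun v => E v ∈ B)))
        (Function.onFun Disjoint fun v => e ⁻¹' {v}) := by
      intro v₁ _ v₂ _ hne
      refine Set.disjoint_left.mpr fun ω h1 h2 => hne ?_
      rw [← h1, ← h2]
    rw [hdecomp,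
      integral_biUnion_finset _ (fun v _ => hatommeas v) hdisj
        (fun v _ => hf1int.integrableOn),
      integral_biUnion_finset _ (fun v _ => hatommeas v) hdisj
        (fun v _ => hf2int.integrableOn)]
    exact Finset.sum_le_sum fun v _ => hatom v
  -- conclude via conditional expectations
  have hDint : Integrable (f2 - f1) μ := hf2int.sub hf1int
  have hc_meas : StronglyMeasurable[MeasurableSpace.comap (history P alpha lam t)
      inferInstance] (μ[f2 - f1 | MeasurableSpace.comap (history P alpha lam t)
      inferInstance]) := stronglyMeasurable_condExp
  have hc_int : Integrable (μ[f2 - f1 | MeasurableSpace.comap (history P alpha lam t)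
      inferInstance]) (μ.trim hm) := Integrable.trim hm integrable_condExp hc_meas
  have h0' : 0 ≤ᵐ[μ.trim hm] (μ[f2 - f1 | MeasurableSpace.comap (history P alpha lam t)
      inferInstance]) := by
    refine ae_nonneg_of_forall_setIntegral_nonneg hc_int fun s hs _ => ?_
    rw [← setIntegral_trim hm hc_meas hs, setIntegral_condExp hm hDint hs]
    have heq : ∫ ω in s, (f2 - f1) ω ∂μ = ∫ ω in s, f2 ω ∂μ - ∫ ω in s, f1 ω ∂μ :=
      integral_sub hf2int.integrableOn hf1int.integrableOn
    rw [heq]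
    linarith [hkey s hs]
  have h0 : 0 ≤ᵐ[μ] (μ[f2 - f1 | MeasurableSpace.comap (history P alpha lam t)
      inferInstance]) := ae_le_of_ae_le_trim h0'
  have hsub : μ[f2 - f1 | MeasurableSpace.comap (history P alpha lam t) inferInstance]
      =ᵐ[μ] μ[f2 | MeasurableSpace.comap (history P alpha lam t) inferInstance]
        - μ[f1 | MeasurableSpace.comap (history P alpha lam t) inferInstance] :=
    condExp_sub hf2int hf1int _
  filter_upwards [h0, hsub] with ω h1 h2
  have h3 : (0:ℝ) ≤ (μ[f2 | MeasurableSpace.comap (history P alpha lam t) inferInstance]) ω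
      - (μ[f1 | MeasurableSpace.comap (history P alpha lam t) inferInstance]) ω := by
    rw [← Pi.sub_apply, ← h2]
    exact h1
  rw [hf1def, hf2def]
  linarith
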